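/- Let 𝒜' ⊂ ℂ³ be the arrangement defined by xyz(x−y)(x−z) = 0 (the deleted A₃ arrangement). Then 𝒜' is free with basis θ₁ = θ_E = x∂_x + y∂_y + z∂_z, θ₂ = y(x−y)∂_y, θ₃ = z(x−z)∂_z of D(𝒜'), so exp(𝒜') = (1, 2, 2). Moreover, for the hyperplane H : y − z = 0, one has θ₂(y−z) ∉ (y−z)·S and θ₃(y−z) ∉ (y−z)·S, but (θ₂+θ₃)(y−z) ∈ (y−z)·S; hence algebraic genericity of a hyperplane with respect to a minimal generating set depends on the choice of generators. -/

import Mathlib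

open MvPolynomial

noncomputable section

/-- The polynomial ring `S = ℂ[x₁,…,x_ℓ]`. -/
abbrev PS (ℓ : ℕ) : Type := MvPolynomial (Fin ℓ) ℂ

/-- The module of ℂ-derivations of `S`. -/
abbrev Der (ℓ : ℕ) : Type := Derivation ℂ (PS ℓ) (PS ℓ)

/-- The logarithmic derivation module of a set of defining forms in a ℂ-algebra. -/
def logDer {R : Type} [CommRing R] [Algebra ℂ R] (A : Set R) :
    Submodule R (Derivation ℂ R R) where
  carrier := {θ | ∀ α ∈ A, θ α ∈ Ideal.span {α}}
  add_mem' := fun ha hb α hα => by simpa using add_mem (ha α hα) (hb α hα)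
  zero_mem' := fun α hα => by simp
  smul_mem' := fun c θ h α hα => by simpa using Ideal.mul_mem_left _ c (h α hα)

/-- The submodule `D₀` of derivations annihilating every defining form. -/
def logDer0 {R : Type} [CommRing R] [Algebra ℂ R] (A : Set R) :
    Submodule R (Derivation ℂ R R) where
  carrier := {θ | ∀ α ∈ A, θ α = 0}
  add_mem' := fun ha hb α hα => by simp [Set.mem_setOf_eq] at *; simp [ha α hα, hb α hα]
  zero_mem' := fun α hα => by simp
  smul_mem' := fun c θ h α hα => by simp [Set.mem_setOf_eq] at *; simp [h α hα]

/-- The Euler derivation `Σ xᵢ ∂ᵢ`. -/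
def euler (ℓ : ℕ) : Der ℓ := mkDerivation ℂ (fun i : Fin ℓ => X i)

/-- A derivation is homogeneous of (polynomial) degree `d` if it sends every variable to a
homogeneous polynomial of degree `d`. -/
def IsHomogDer {ℓ : ℕ} (θ : Der ℓ) (d : ℕ) : Prop := ∀ i, (θ (X i)).IsHomogeneous d

/-- A (nonzero) linear form. -/
def IsLinForm {ℓ : ℕ} (α : PS ℓ) : Prop := α.IsHomogeneous 1 ∧ α ≠ 0

/-- A minimal generating family of the logarithmic derivation module of `A`. -/
def IsMinGen {R : Type} [CommRing R] [Algebra ℂ R] (A : Set R) {s : ℕ}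
    (θ : Fin s → Derivation ℂ R R) : Prop :=
  Submodule.span R (Set.range θ) = logDer A ∧
    ∀ i, θ i ∉ Submodule.span R (θ '' {j | j ≠ i})

/-- A minimal generating family of `D₀(A)`. -/
def IsMinGen0 {R : Type} [CommRing R] [Algebra ℂ R] (A : Set R) {s : ℕ}
    (θ : Fin s → Derivation ℂ R R) : Prop :=
  Submodule.span R (Set.range θ) = logDer0 A ∧
    ∀ i, θ i ∉ Submodule.span R (θ '' {j | j ≠ i})

/-- `exp(A) = M`:  the multiset of degrees of a minimal homogeneous generating family
of `D(A)` is `M`. -/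
def HasExp {ℓ : ℕ} (A : Set (PS ℓ)) (M : Multiset ℕ) : Prop :=
  ∃ (s : ℕ) (θ : Fin s → Der ℓ) (d : Fin s → ℕ),
    (∀ i, IsHomogDer (θ i) (d i)) ∧ IsMinGen A θ ∧ M = Multiset.map d Finset.univ.val

/-- `exp₀(A) = M`: the multiset of degrees of a minimal homogeneous generating family
of `D₀(A)` is `M`. -/
def HasExp0 {ℓ : ℕ} (A : Set (PS ℓ)) (M : Multiset ℕ) : Prop :=
  ∃ (s : ℕ) (θ : Fin s → Der ℓ) (d : Fin s → ℕ),
    (∀ i, IsHomogDer (θ i) (d i)) ∧ IsMinGen0 A θ ∧ M = Multiset.map d Finset.univ.val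

/-- The rank of a finite set of linear forms (= codimension of the corresponding flat). -/
def rk {ℓ : ℕ} (B : Finset (PS ℓ)) : ℕ :=
  Module.finrank ℂ (Submodule.span ℂ (B : Set (PS ℓ)))

/-- `H = {α = 0}` is combinatorially generic with respect to the arrangement `A` in `ℂ^m`:
it contains no nonzero flat of `A`, i.e. adding it to any subarrangement raises the rank
until the ambient rank `m` is reached. -/
def CombGeneric {ℓ : ℕ} (α : PS ℓ) (A : Finset (PS ℓ)) (m : ℕ) : Prop :=
  ∀ B ⊆ A, rk (insert α B) = min (rk B + 1) m

/-- Two arrangements have the same combinatorics (isomorphic intersection lattices):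
there is a bijection of the hyperplanes preserving the rank of every subarrangement. -/
def SameComb {ℓ ℓ' : ℕ} (A₁ : Finset (PS ℓ)) (A₂ : Finset (PS ℓ')) : Prop :=
  ∃ e : PS ℓ → PS ℓ', Set.BijOn e A₁ A₂ ∧
    ∀ B ⊆ A₁, rk (B.image e) = rk B

/-- The number of hyperplanes of the restriction of `A` to `{α = 0}`: the number of
proportionality classes of the (nonzero) images of the forms of `A` in `S/(α)`. -/
def nRes {ℓ : ℕ} (α : PS ℓ) (A : Finset (PS ℓ)) : ℕ :=
  letI : DecidableEq (Submodule ℂ (PS ℓ ⧸ Ideal.span {α})) := Classical.decEq _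
  (A.image fun β =>
    Submodule.span ℂ {Ideal.Quotient.mk (Ideal.span {α}) β}).card

end

noncomputable section

/-- `θ₂ = y(x−y)∂_y`. -/
def theta2 : Der 3 := mkDerivation ℂ
  (fun i : Fin 3 => if i = 1 then (X 1 : PS 3) * (X 0 - X 1) else 0)

/-- `θ₃ = z(x−z)∂_z`. -/
def theta3 : Der 3 := mkDerivation ℂ
  (fun i : Fin 3 => if i = 2 then (X 2 : PS 3) * (X 0 - X 2) else 0)

/-- The deleted `A₃` arrangement `xyz(x−y)(x−z) = 0`. -/
def deletedA3 : Set (PS 3) := {X 0, X 1, X 2, X 0 - X 1, X 0 - X 2}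

-- ===== auxiliary lemmas =====

lemma quot_eq_aeval (i j : Fin 3) (p : PS 3) :
    p - aeval (Function.update X i ((X j : PS 3))) p ∈
      Ideal.span {(X i : PS 3) - X j} := by
  set I := Ideal.span {(X i : PS 3) - X j}
  rw [← Ideal.Quotient.eq_zero_iff_mem, map_sub, sub_eq_zero]
  have : (Ideal.Quotient.mkₐ ℂ I) = (Ideal.Quotient.mkₐ ℂ I).comp
      (aeval (Function.update X i ((X j : PS 3)))) := by
    apply MvPolynomial.algHom_ext
    intro k
    simp only [AlgHom.comp_apply, aeval_X]
    by_cases hk : k = i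
    · subst hk
      simp only [Function.update_self, Ideal.Quotient.mkₐ_eq_mk]
      rw [Ideal.Quotient.mk_eq_mk_iff_sub_mem]
      exact Ideal.subset_span rfl
    · rw [Function.update_of_ne hk]
  calc (Ideal.Quotient.mk I) p = (Ideal.Quotient.mkₐ ℂ I) p := rfl
    _ = _ := by rw [this]; rfl

lemma cancel_X (i j : Fin 3) (hij : j ≠ i) (q : PS 3)
    (h : (X j : PS 3) * q ∈ Ideal.span {(X i : PS 3) - X j}) :
    q ∈ Ideal.span {(X i : PS 3) - X j} := by
  obtain ⟨r, hr⟩ := Ideal.mem_span_singleton'.mp h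
  have happ := congrArg (aeval (Function.update X i ((X j : PS 3)))) hr
  simp only [map_mul, map_sub, aeval_X, Function.update_self,
    Function.update_of_ne hij, sub_self, mul_zero] at happ
  have hq0 : aeval (Function.update X i ((X j : PS 3))) q = 0 := by
    rcases mul_eq_zero.mp happ.symm with h' | h'
    · exact absurd h' (X_ne_zero j)
    · exact h'
  have := quot_eq_aeval i j q
  rwa [hq0, sub_zero] at this

lemma euler_X (i : Fin 3) : euler 3 (X i) = X i := mkDerivation_X _ _ _

lemma theta2_X (i : Fin 3) :
    theta2 (X i) = if i = 1 then (X 1 : PS 3) * (X 0 - X 1) else 0 :=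
  mkDerivation_X _ _ _

lemma theta3_X (i : Fin 3) :
    theta3 (X i) = if i = 2 then (X 2 : PS 3) * (X 0 - X 2) else 0 :=
  mkDerivation_X _ _ _

lemma X_sub_ne (i j : Fin 3) (h : i ≠ j) : (X i : PS 3) - X j ≠ 0 :=
  sub_ne_zero.mpr (fun he => h (X_injective he))

lemma euler_mem_logDer : euler 3 ∈ logDer deletedA3 := by
  intro α hα
  simp only [deletedA3, Set.mem_insert_iff, Set.mem_singleton_iff] at hα
  rcases hα with rfl | rfl | rfl | rfl | rfl <;>
    exact Ideal.mem_span_singleton'.mpr ⟨1, by simp [map_sub, euler_X]⟩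

lemma theta2_mem_logDer : theta2 ∈ logDer deletedA3 := by
  intro α hα
  simp only [deletedA3, Set.mem_insert_iff, Set.mem_singleton_iff] at hα
  rcases hα with rfl | rfl | rfl | rfl | rfl
  · exact Ideal.mem_span_singleton'.mpr ⟨0, by simp [theta2_X]⟩
  · exact Ideal.mem_span_singleton'.mpr ⟨X 0 - X 1, by simp [theta2_X]; try ring⟩
  · exact Ideal.mem_span_singleton'.mpr ⟨0, by simp [theta2_X]⟩
  · exact Ideal.mem_span_singleton'.mpr ⟨-X 1, by simp [map_sub, theta2_X]; try ring⟩
  · exact Ideal.mem_span_singleton'.mpr ⟨0, by simp [map_sub, theta2_X]⟩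

lemma theta3_mem_logDer : theta3 ∈ logDer deletedA3 := by
  intro α hα
  simp only [deletedA3, Set.mem_insert_iff, Set.mem_singleton_iff] at hα
  rcases hα with rfl | rfl | rfl | rfl | rfl
  · exact Ideal.mem_span_singleton'.mpr ⟨0, by simp [theta3_X]⟩
  · exact Ideal.mem_span_singleton'.mpr ⟨0, by simp [theta3_X]⟩
  · exact Ideal.mem_span_singleton'.mpr ⟨X 0 - X 2, by simp [theta3_X]; try ring⟩
  · exact Ideal.mem_span_singleton'.mpr ⟨0, by simp [map_sub, theta3_X]⟩
  · exact Ideal.mem_span_singleton'.mpr ⟨-X 2, by simp [map_sub, theta3_X]; try ring⟩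

lemma lin_indep : LinearIndependent (PS 3) ![euler 3, theta2, theta3] := by
  rw [Fintype.linearIndependent_iff]
  intro g hg
  rw [Fin.sum_univ_three] at hg
  simp only [Matrix.cons_val_zero, Matrix.cons_val_one, Matrix.head_cons,
    Matrix.cons_val_two, Matrix.tail_cons] at hg
  have e0 := congrArg (fun D : Der 3 => D (X 0)) hg
  have e1 := congrArg (fun D : Der 3 => D (X 1)) hg
  have e2 := congrArg (fun D : Der 3 => D (X 2)) hg
  simp only [Derivation.add_apply, Derivation.smul_apply, euler_X, theta2_X, theta3_X,
    smul_eq_mul] at e0 e1 e2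
  norm_num at e0 e1 e2
  rw [if_neg (show ¬((0:Fin 3) = 2) by decide), add_zero] at e0
  rw [if_neg (show ¬((1:Fin 3) = 2) by decide), add_zero] at e1
  rw [if_neg (show ¬((2:Fin 3) = 1) by decide), add_zero] at e2
  have h0 : g 0 = 0 := by
    rcases mul_eq_zero.mp e0 with h | h
    · exact h
    · exact absurd h (X_ne_zero _)
  rw [h0, zero_mul, zero_add] at e1 e2
  have h1 : g 1 = 0 := by
    rcases mul_eq_zero.mp e1 with h | h
    · exact h
    · exact absurd h (mul_ne_zero (X_ne_zero _) (X_sub_ne 0 1 (by decide)))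
  have h2 : g 2 = 0 := by
    rcases mul_eq_zero.mp e2 with h | h
    · exact h
    · exact absurd h (mul_ne_zero (X_ne_zero _) (X_sub_ne 0 2 (by decide)))
  intro i
  fin_cases i <;> assumption

lemma span_eq_logDer :
    Submodule.span (PS 3) {euler 3, theta2, theta3} = logDer deletedA3 := by
  apply le_antisymm
  · rw [Submodule.span_le]
    rintro θ (rfl | rfl | rfl)
    · exact euler_mem_logDer
    · exact theta2_mem_logDer
    · exact theta3_mem_logDer
  · intro θ hθ
    have h0 : θ (X 0) ∈ Ideal.span {(X 0 : PS 3)} := hθ _ (by simp [deletedA3])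
    have h1 : θ (X 1) ∈ Ideal.span {(X 1 : PS 3)} := hθ _ (by simp [deletedA3])
    have h2 : θ (X 2) ∈ Ideal.span {(X 2 : PS 3)} := hθ _ (by simp [deletedA3])
    have h01 : θ (X 0 - X 1) ∈ Ideal.span {(X 0 : PS 3) - X 1} :=
      hθ _ (by simp [deletedA3])
    have h02 : θ (X 0 - X 2) ∈ Ideal.span {(X 0 : PS 3) - X 2} :=
      hθ _ (by simp [deletedA3])
    obtain ⟨a, ha⟩ := Ideal.mem_span_singleton'.mp h0
    obtain ⟨b0, hb0⟩ := Ideal.mem_span_singleton'.mp h1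
    obtain ⟨c0, hc0⟩ := Ideal.mem_span_singleton'.mp h2
    -- b : (a - b0) = b * (x - y)
    have hb' : (X 1 : PS 3) * (a - b0) ∈ Ideal.span {(X 0 : PS 3) - X 1} := by
      have : (X 1 : PS 3) * (a - b0) = θ (X 0 - X 1) - a * (X 0 - X 1) := by
        rw [map_sub, ← ha, ← hb0]; ring
      rw [this]
      exact Submodule.sub_mem _ h01 (Ideal.mul_mem_left _ _ (Ideal.subset_span rfl))
    obtain ⟨b, hb⟩ := Ideal.mem_span_singleton'.mp (cancel_X 0 1 (by decide) _ hb')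
    have hc' : (X 2 : PS 3) * (a - c0) ∈ Ideal.span {(X 0 : PS 3) - X 2} := by
      have : (X 2 : PS 3) * (a - c0) = θ (X 0 - X 2) - a * (X 0 - X 2) := by
        rw [map_sub, ← ha, ← hc0]; ring
      rw [this]
      exact Submodule.sub_mem _ h02 (Ideal.mul_mem_left _ _ (Ideal.subset_span rfl))
    obtain ⟨c, hc⟩ := Ideal.mem_span_singleton'.mp (cancel_X 0 2 (by decide) _ hc')
    have hθeq : θ = a • euler 3 + (-b) • theta2 + (-c) • theta3 := by
      apply derivation_ext
      intro i
      rcases (by decide : ∀ j : Fin 3, j = 0 ∨ j = 1 ∨ j = 2) i with rfl | rfl | rfl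
      · simp only [Derivation.add_apply, Derivation.smul_apply, euler_X, theta2_X,
          theta3_X, smul_eq_mul]
        rw [if_neg (show ¬((0:Fin 3) = 1) by decide),
          if_neg (show ¬((0:Fin 3) = 2) by decide)]
        linear_combination -ha
      · simp only [Derivation.add_apply, Derivation.smul_apply, euler_X, theta2_X,
          theta3_X, smul_eq_mul]
        rw [if_true, if_neg (show ¬((1:Fin 3) = 2) by decide)]
        linear_combination -hb0 + X 1 * hb
      · simp only [Derivation.add_apply, Derivation.smul_apply, euler_X, theta2_X,
          theta3_X, smul_eq_mul]
        rw [if_neg (show ¬((2:Fin 3) = 1) by decide), if_true]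
        linear_combination -hc0 + X 2 * hc
    rw [hθeq]
    refine Submodule.add_mem _ (Submodule.add_mem _ ?_ ?_) ?_ <;>
      apply Submodule.smul_mem <;> apply Submodule.subset_span <;> simp

lemma euler_homog : IsHomogDer (euler 3) 1 := by
  intro i; rw [euler_X]; exact isHomogeneous_X _ _

lemma theta2_homog : IsHomogDer theta2 2 := by
  intro i
  rw [theta2_X]
  by_cases h : i = 1
  · rw [if_pos h]
    exact (isHomogeneous_X _ _).mul ((isHomogeneous_X _ _).sub (isHomogeneous_X _ _))
  · rw [if_neg h]; exact isHomogeneous_zero _ _ _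

lemma theta3_homog : IsHomogDer theta3 2 := by
  intro i
  rw [theta3_X]
  by_cases h : i = 2
  · rw [if_pos h]
    exact (isHomogeneous_X _ _).mul ((isHomogeneous_X _ _).sub (isHomogeneous_X _ _))
  · rw [if_neg h]; exact isHomogeneous_zero _ _ _

/-- the deleted `A₃` arrangement is free with basis `θ_E, θ₂ = y(x−y)∂_y,
θ₃ = z(x−z)∂_z`, so `exp = (1,2,2)`; moreover for `H : y − z = 0` one has
`θ₂(y−z), θ₃(y−z) ∉ (y−z)` but `(θ₂+θ₃)(y−z) ∈ (y−z)`, so algebraic genericity depends on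
the choice of generators. -/
theorem deletedA3_free_and_genericity_depends_on_generators :
    euler 3 ∈ logDer deletedA3 ∧ theta2 ∈ logDer deletedA3 ∧ theta3 ∈ logDer deletedA3 ∧
    LinearIndependent (PS 3) ![euler 3, theta2, theta3] ∧
    Submodule.span (PS 3) {euler 3, theta2, theta3} = logDer deletedA3 ∧
    IsHomogDer (euler 3) 1 ∧ IsHomogDer theta2 2 ∧ IsHomogDer theta3 2 ∧
    HasExp deletedA3 {1, 2, 2} ∧
    theta2 ((X 1 : PS 3) - X 2) ∉ Ideal.span {(X 1 : PS 3) - X 2} ∧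
    theta3 ((X 1 : PS 3) - X 2) ∉ Ideal.span {(X 1 : PS 3) - X 2} ∧
    (theta2 + theta3) ((X 1 : PS 3) - X 2) ∈ Ideal.span {(X 1 : PS 3) - X 2} := by
  have hli := lin_indep
  refine ⟨euler_mem_logDer, theta2_mem_logDer, theta3_mem_logDer, hli, span_eq_logDer,
    euler_homog, theta2_homog, theta3_homog, ?_, ?_, ?_, ?_⟩
  · -- HasExp
    refine ⟨3, ![euler 3, theta2, theta3], ![1, 2, 2], ?_, ⟨?_, ?_⟩, by decide⟩
    · intro i
      fin_cases i
      · exact euler_homog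
      · exact theta2_homog
      · exact theta3_homog
    · rw [show Set.range ![euler 3, theta2, theta3] = {euler 3, theta2, theta3} by
        ext D; simp [Matrix.range_cons, Matrix.range_empty]
        exact ⟨fun h => h.elim (fun h => Or.inr (Or.inr h)) (fun h => h.elim (fun h => Or.inr (Or.inl h)) Or.inl),
          fun h => h.elim (fun h => Or.inr (Or.inr h)) (fun h => h.elim (fun h => Or.inr (Or.inl h)) Or.inl)⟩]
      exact span_eq_logDer
    · intro i
      exact hli.notMem_span_image (by simp)
  · -- θ₂(y-z) ∉ (y-z)
    intro hmem
    have hval : theta2 ((X 1 : PS 3) - X 2) = (X 1 : PS 3) * (X 0 - X 1) := by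
      simp [map_sub, theta2_X]
    rw [hval] at hmem
    obtain ⟨r, hr⟩ := Ideal.mem_span_singleton'.mp hmem
    have := congrArg (aeval (Function.update X 2 ((X 1 : PS 3)))) hr
    simp only [map_mul, map_sub, aeval_X, Function.update_self,
      Function.update_of_ne (show (1:Fin 3) ≠ 2 by decide),
      Function.update_of_ne (show (0:Fin 3) ≠ 2 by decide),
      sub_self, mul_zero] at this
    exact mul_ne_zero (X_ne_zero _) (X_sub_ne 0 1 (by decide)) this.symm
  · -- θ₃(y-z) ∉ (y-z)
    intro hmem
    have hval : theta3 ((X 1 : PS 3) - X 2) = -((X 2 : PS 3) * (X 0 - X 2)) := by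
      simp [map_sub, theta3_X]
    rw [hval] at hmem
    obtain ⟨r, hr⟩ := Ideal.mem_span_singleton'.mp hmem
    have := congrArg (aeval (Function.update X 1 ((X 2 : PS 3)))) hr
    simp only [map_mul, map_sub, map_neg, aeval_X, Function.update_self,
      Function.update_of_ne (show (2:Fin 3) ≠ 1 by decide),
      Function.update_of_ne (show (0:Fin 3) ≠ 1 by decide),
      sub_self, mul_zero] at this
    exact mul_ne_zero (X_ne_zero _) (X_sub_ne 0 2 (by decide))
      (neg_eq_zero.mp this.symm)
  · -- (θ₂+θ₃)(y-z) ∈ (y-z)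
    refine Ideal.mem_span_singleton'.mpr ⟨X 0 - X 1 - X 2, ?_⟩
    simp only [Derivation.add_apply, map_sub, theta2_X, theta3_X]
    rw [if_true, if_true, if_neg (show ¬((1:Fin 3) = 2) by decide),
      if_neg (show ¬((2:Fin 3) = 1) by decide)]
    ring


end
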